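/- Let a₀, a₁, b₀ > 0. Then for all real w, b₀/(a₀σ₊(w)² + a₁)·σ₊'(w) + b₀/(a₀σ₋(w)² + a₁)·σ₋'(w) = 2b₀(a₀+a₁)/(4a₀a₁w² + (a₀+a₁)²), where σ±(w) = w ± √(w²+1). Consequently ∫₀^∞ b₀/(a₀z² + a₁) dz = ∫₀^∞ 2b₀(a₀+a₁)/(4a₀a₁w² + (a₀+a₁)²) dw, and both integrals equal (b₀/√(a₀a₁))·(π/2). -/

import Mathlib

open MeasureTheory

/-- The direct image of the 1-form `S(z)dz` under `π(z) = (z²-1)/(2z)`, computed with the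
two sections `σ±(w) = w ± √(w²+1)`, whose derivatives are `1 ± w/√(w²+1)`. -/
noncomputable def pushforward (S : ℝ → ℝ) (w : ℝ) : ℝ :=
  S (w + Real.sqrt (w ^ 2 + 1)) * (1 + w / Real.sqrt (w ^ 2 + 1)) +
  S (w - Real.sqrt (w ^ 2 + 1)) * (1 - w / Real.sqrt (w ^ 2 + 1))

lemma integral_aux (a c b : ℝ) (ha : 0 < a) (hc : 0 < c) :
    (∫ z in Set.Ioi (0:ℝ), b / (a * z ^ 2 + c))
      = b / Real.sqrt (a * c) * (Real.pi / 2) := by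
  have hk : (0:ℝ) < Real.sqrt (a / c) := Real.sqrt_pos.mpr (div_pos ha hc)
  have hk2 : Real.sqrt (a / c) ^ 2 = a / c := Real.sq_sqrt (div_pos ha hc).le
  have key : ∀ z : ℝ, b / (a * z ^ 2 + c)
      = (b / c) * (1 + (Real.sqrt (a / c) * z) ^ 2)⁻¹ := by
    intro z
    have hd : 0 < a * z ^ 2 + c := by positivity
    rw [mul_pow, hk2]
    rw [show (1:ℝ) + a / c * z ^ 2 = (a * z ^ 2 + c) / c from by field_simp; ring]
    rw [inv_div]
    field_simp
  simp_rw [key]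
  rw [MeasureTheory.integral_const_mul,
    MeasureTheory.integral_comp_mul_left_Ioi (fun x => (1 + x ^ 2)⁻¹) 0 hk,
    mul_zero, integral_Ioi_inv_one_add_sq, Real.arctan_zero, sub_zero, smul_eq_mul]
  have hsa : (0:ℝ) < Real.sqrt a := Real.sqrt_pos.mpr ha
  have hsc : (0:ℝ) < Real.sqrt c := Real.sqrt_pos.mpr hc
  rw [Real.sqrt_div ha.le]
  rw [Real.sqrt_mul ha.le]
  have hc2 : Real.sqrt c ^ 2 = c := Real.sq_sqrt hc.le
  field_simp
  linear_combination b * hc2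

/-- Degree-2 example: the direct image of `b₀/(a₀z²+a₁) dz` under `π(z) = (z²-1)/(2z)`
is `2b₀(a₀+a₁)/(4a₀a₁w²+(a₀+a₁)²) dw`; consequently the two integrals over `(0,∞)`
agree and both equal `(b₀/√(a₀a₁))·(π/2)`. -/
theorem pushforward_degree_two (a₀ a₁ b₀ : ℝ)
    (ha₀ : 0 < a₀) (ha₁ : 0 < a₁) (hb₀ : 0 < b₀) :
    (∀ w : ℝ, pushforward (fun z => b₀ / (a₀ * z ^ 2 + a₁)) w
        = 2 * b₀ * (a₀ + a₁) / (4 * a₀ * a₁ * w ^ 2 + (a₀ + a₁) ^ 2)) ∧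
    (∫ z in Set.Ioi (0:ℝ), b₀ / (a₀ * z ^ 2 + a₁))
      = (∫ w in Set.Ioi (0:ℝ),
          2 * b₀ * (a₀ + a₁) / (4 * a₀ * a₁ * w ^ 2 + (a₀ + a₁) ^ 2)) ∧
    (∫ z in Set.Ioi (0:ℝ), b₀ / (a₀ * z ^ 2 + a₁))
      = b₀ / Real.sqrt (a₀ * a₁) * (Real.pi / 2) := by
  have hI1 : (∫ z in Set.Ioi (0:ℝ), b₀ / (a₀ * z ^ 2 + a₁))
      = b₀ / Real.sqrt (a₀ * a₁) * (Real.pi / 2) := integral_aux a₀ a₁ b₀ ha₀ ha₁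
  have hI2 : (∫ w in Set.Ioi (0:ℝ),
      2 * b₀ * (a₀ + a₁) / (4 * a₀ * a₁ * w ^ 2 + (a₀ + a₁) ^ 2))
      = 2 * b₀ * (a₀ + a₁) / Real.sqrt (4 * a₀ * a₁ * (a₀ + a₁) ^ 2) * (Real.pi / 2) :=
    integral_aux (4 * a₀ * a₁) ((a₀ + a₁) ^ 2) (2 * b₀ * (a₀ + a₁))
      (by positivity) (by positivity)
  have hg : (0:ℝ) < Real.sqrt (a₀ * a₁) := Real.sqrt_pos.mpr (by positivity)
  have hg2 : Real.sqrt (a₀ * a₁) ^ 2 = a₀ * a₁ := Real.sq_sqrt (by positivity)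
  have hsq : Real.sqrt (4 * a₀ * a₁ * (a₀ + a₁) ^ 2)
      = 2 * Real.sqrt (a₀ * a₁) * (a₀ + a₁) := by
    rw [show 4 * a₀ * a₁ * (a₀ + a₁) ^ 2
        = (2 * Real.sqrt (a₀ * a₁) * (a₀ + a₁)) ^ 2 from by
      linear_combination (-4 * (a₀ + a₁) ^ 2) * hg2]
    exact Real.sqrt_sq (by positivity)
  have hval : 2 * b₀ * (a₀ + a₁) / Real.sqrt (4 * a₀ * a₁ * (a₀ + a₁) ^ 2) * (Real.pi / 2)
      = b₀ / Real.sqrt (a₀ * a₁) * (Real.pi / 2) := by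
    rw [hsq]
    have hA : (0:ℝ) < a₀ + a₁ := by positivity
    field_simp
  refine ⟨?_, by rw [hI1, hI2, hval], hI1⟩
  intro w
  set s := Real.sqrt (w ^ 2 + 1) with hs_def
  have hs0 : (0:ℝ) < s := Real.sqrt_pos.mpr (by positivity)
  have hs : s ^ 2 = w ^ 2 + 1 := Real.sq_sqrt (by positivity)
  have hdp : (0:ℝ) < a₀ * (w + s) ^ 2 + a₁ := by positivity
  have hdm : (0:ℝ) < a₀ * (w - s) ^ 2 + a₁ := by positivity
  have hden : (0:ℝ) < 4 * a₀ * a₁ * w ^ 2 + (a₀ + a₁) ^ 2 := by positivity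
  have hnum : (s + w) * (a₀ * (w - s) ^ 2 + a₁) + (s - w) * (a₀ * (w + s) ^ 2 + a₁)
      = 2 * (a₀ + a₁) * s := by
    linear_combination (2 * a₀ * s) * hs
  have hprod : (a₀ * (w + s) ^ 2 + a₁) * (a₀ * (w - s) ^ 2 + a₁)
      = 4 * a₀ * a₁ * w ^ 2 + (a₀ + a₁) ^ 2 := by
    linear_combination (a₀ ^ 2 * (s ^ 2 - w ^ 2 - 1) + 2 * a₀ ^ 2 + 2 * a₀ * a₁) * hs
  have step : pushforward (fun z => b₀ / (a₀ * z ^ 2 + a₁)) w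
      = b₀ * ((s + w) * (a₀ * (w - s) ^ 2 + a₁) + (s - w) * (a₀ * (w + s) ^ 2 + a₁))
        / (s * ((a₀ * (w + s) ^ 2 + a₁) * (a₀ * (w - s) ^ 2 + a₁))) := by
    unfold pushforward
    rw [← hs_def]
    field_simp
  rw [step, hnum, hprod]
  field_simp
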